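/- Let λ ∈ (0,1)^d be distinct and α ∈ ℝ_{>0}^d with Σ_{i=1}^d α_i/λ_i = 1. Then the polynomial r(x) = Π_{i=1}^d(1 − λ_i x) + x·Σ_{i=1}^d α_i Π_{j≠i}(1 − λ_j x) has degree exactly d − 1, and all its d − 1 roots are real, distinct, and greater than 1. -/

import Mathlib

open Finset Polynomial

lemma aux_prod_neg_sign {ι : Type*} {s : Finset ι} {f : ι → ℝ}
    (h : ∀ m ∈ s, f m < 0) : 0 < (-1 : ℝ) ^ s.card * ∏ m ∈ s, f m := by
  induction s using Finset.cons_induction with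
  | empty => simp
  | cons a s ha ih =>
    rw [Finset.prod_cons, Finset.card_cons, pow_succ]
    have h1 : f a < 0 := h a (Finset.mem_cons_self a s)
    have h2 := ih (fun m hm => h m (Finset.mem_cons_of_mem hm))
    nlinarith


lemma aux_prod_neg {ι : Type*} (s : Finset ι) (f : ι → ℝ) :
    ∏ m ∈ s, (-f m) = (-1 : ℝ) ^ s.card * ∏ m ∈ s, f m := by
  induction s using Finset.cons_induction with
  | empty => simp
  | cons a s ha ih => rw [Finset.prod_cons, Finset.card_cons, pow_succ, Finset.prod_cons, ih]; ring


lemma aux_eval (d : ℕ) (α lam : Fin d → ℝ) (hl0 : ∀ i, 0 < lam i)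
    (r : Polynomial ℝ)
    (hr : r = ∏ i, (1 - C (lam i) * X) +
      X * ∑ i, C (α i) * ∏ j ∈ Finset.univ.erase i, (1 - C (lam j) * X))
    (k : Fin d) :
    r.eval (lam k)⁻¹ = (lam k)⁻¹ * α k * ∏ j ∈ Finset.univ.erase k, (1 - lam j * (lam k)⁻¹) := by
  have hk0 : lam k ≠ 0 := ne_of_gt (hl0 k)
  have hz : (1 : ℝ) - lam k * (lam k)⁻¹ = 0 := by field_simp; norm_num
  rw [hr]
  simp only [eval_add, eval_prod, eval_mul, eval_finset_sum, eval_sub, eval_one, eval_C, eval_X]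
  rw [Finset.prod_eq_zero (Finset.mem_univ k) hz]
  rw [Finset.sum_eq_single k]
  · ring
  · intro i _ hik
    rw [Finset.prod_eq_zero (Finset.mem_erase.mpr ⟨Ne.symm hik, Finset.mem_univ k⟩) hz]
    ring
  · simp


lemma aux_sign (d : ℕ) (α lam : Fin d → ℝ) (hl0 : ∀ i, 0 < lam i)
    (halpha : ∀ i, 0 < α i)
    (r : Polynomial ℝ)
    (hr : r = ∏ i, (1 - C (lam i) * X) +
      X * ∑ i, C (α i) * ∏ j ∈ Finset.univ.erase i, (1 - C (lam j) * X))
    (σ : Equiv.Perm (Fin d))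
    (hmono : StrictMono fun i => (lam (σ i))⁻¹) (i : Fin d) :
    0 < (-1 : ℝ) ^ (i : ℕ) * r.eval (lam (σ i))⁻¹ := by
  rw [aux_eval d α lam hl0 r hr (σ i)]
  have himg : (Finset.univ.erase i).image σ = Finset.univ.erase (σ i) := by
    ext j
    simp only [Finset.mem_image, Finset.mem_erase, Finset.mem_univ, and_true]
    constructor
    · rintro ⟨m, hm, rfl⟩
      exact fun h => hm (σ.injective h)
    · intro hj
      exact ⟨σ.symm j, fun h => hj (by rw [← σ.apply_symm_apply j, h]), σ.apply_symm_apply j⟩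
  have hre : ∏ j ∈ Finset.univ.erase (σ i), (1 - lam j * (lam (σ i))⁻¹)
      = ∏ m ∈ Finset.univ.erase i, (1 - lam (σ m) * (lam (σ i))⁻¹) := by
    rw [← himg, Finset.prod_image (fun a _ b _ h => σ.injective h)]
  have hsplit : (Finset.univ.erase i : Finset (Fin d)) = Finset.Iio i ∪ Finset.Ioi i := by
    ext m
    simp only [Finset.mem_erase, Finset.mem_univ, and_true, Finset.mem_union, Finset.mem_Iio,
      Finset.mem_Ioi]
    exact ne_iff_lt_or_gt
  have hdisj : Disjoint (Finset.Iio i) (Finset.Ioi i) :=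
    Finset.disjoint_left.mpr fun m h1 h2 =>
      absurd (Finset.mem_Iio.mp h1) (not_lt.mpr (le_of_lt (Finset.mem_Ioi.mp h2)))
  rw [hre, hsplit, Finset.prod_union hdisj]
  set A := ∏ m ∈ Finset.Iio i, (1 - lam (σ m) * (lam (σ i))⁻¹) with hA
  set B := ∏ m ∈ Finset.Ioi i, (1 - lam (σ m) * (lam (σ i))⁻¹) with hB
  have hq : 0 < lam (σ i) := hl0 _
  have hB0 : 0 < B := by
    apply Finset.prod_pos
    intro m hm
    have h := hmono (Finset.mem_Ioi.mp hm)
    have hp : 0 < lam (σ m) := hl0 _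
    have : lam (σ m) * (lam (σ i))⁻¹ < 1 :=
      (mul_lt_mul_of_pos_left h hp).trans_eq (mul_inv_cancel₀ hp.ne')
    linarith
  have hA0 : 0 < (-1 : ℝ) ^ (i : ℕ) * A := by
    have := aux_prod_neg_sign (s := Finset.Iio i)
      (f := fun m => 1 - lam (σ m) * (lam (σ i))⁻¹) ?_
    · rwa [Fin.card_Iio] at this
    · intro m hm
      have h := hmono (Finset.mem_Iio.mp hm)
      have hp : 0 < lam (σ m) := hl0 _
      have : (1:ℝ) < lam (σ m) * (lam (σ i))⁻¹ :=
        (mul_inv_cancel₀ hp.ne').symm.trans_lt (mul_lt_mul_of_pos_left h hp)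
      linarith
  have hc : 0 < (lam (σ i))⁻¹ * α (σ i) := mul_pos (inv_pos.mpr hq) (halpha _)
  calc (0:ℝ) < ((lam (σ i))⁻¹ * α (σ i)) * (((-1 : ℝ) ^ (i : ℕ) * A) * B) :=
        mul_pos hc (mul_pos hA0 hB0)
    _ = (-1 : ℝ) ^ (i : ℕ) * ((lam (σ i))⁻¹ * α (σ i) * (A * B)) := by ring


lemma aux_coeff (e : ℕ) (α lam : Fin (e + 1) → ℝ) (hl0 : ∀ i, 0 < lam i)
    (hsum : ∑ i, α i / lam i = 1)
    (r : Polynomial ℝ)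
    (hr : r = ∏ i, (1 - C (lam i) * X) +
      X * ∑ i, C (α i) * ∏ j ∈ Finset.univ.erase i, (1 - C (lam j) * X)) :
    r.coeff (e + 1) = 0 := by
  have hfac : ∀ a : ℝ, (1 - C a * X : ℝ[X]).natDegree ≤ 1 := fun a => by compute_degree
  have hc1 : ∀ a : ℝ, (1 - C a * X : ℝ[X]).coeff 1 = -a := fun a => by
    simp [coeff_one]
  have hprod : (∏ i, (1 - C (lam i) * X : ℝ[X])).coeff (e + 1) = ∏ i, (-(lam i)) := by
    have h := coeff_prod_of_natDegree_le (s := (Finset.univ : Finset (Fin (e + 1))))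
        (f := fun i => (1 - C (lam i) * X : ℝ[X])) (n := 1) (fun p _ => hfac _)
    simp only [Finset.card_univ, Fintype.card_fin, mul_one] at h
    rw [h]
    exact Finset.prod_congr rfl fun i _ => hc1 _
  have herase : ∀ i : Fin (e + 1),
      (∏ j ∈ Finset.univ.erase i, (1 - C (lam j) * X : ℝ[X])).coeff e
        = ∏ j ∈ Finset.univ.erase i, (-(lam j)) := by
    intro i
    have h := coeff_prod_of_natDegree_le (s := Finset.univ.erase i)
        (f := fun j => (1 - C (lam j) * X : ℝ[X])) (n := 1) (fun p _ => hfac _)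
    rw [Finset.card_erase_of_mem (Finset.mem_univ i), Finset.card_univ, Fintype.card_fin] at h
    simp only [Nat.add_sub_cancel, mul_one] at h
    rw [h]
    exact Finset.prod_congr rfl fun j _ => hc1 _
  have hsum2 : ∑ i, α i * ∏ j ∈ Finset.univ.erase i, lam j = ∏ j, lam j := by
    have h1 : ∀ i : Fin (e + 1),
        α i * ∏ j ∈ Finset.univ.erase i, lam j = (α i / lam i) * ∏ j, lam j := by
      intro i
      rw [← Finset.mul_prod_erase Finset.univ lam (Finset.mem_univ i)]
      have := (hl0 i).ne'
      field_simp
    rw [Finset.sum_congr rfl fun i _ => h1 i, ← Finset.sum_mul, hsum, one_mul]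
  rw [hr, coeff_add, coeff_X_mul, hprod, finset_sum_coeff]
  simp only [coeff_C_mul, herase]
  rw [aux_prod_neg]
  have hterm : ∀ i : Fin (e + 1), α i * ∏ j ∈ Finset.univ.erase i, (-(lam j))
      = (-1 : ℝ) ^ e * (α i * ∏ j ∈ Finset.univ.erase i, lam j) := by
    intro i
    rw [aux_prod_neg, Finset.card_erase_of_mem (Finset.mem_univ i), Finset.card_univ,
      Fintype.card_fin, Nat.add_sub_cancel]
    ring
  rw [Finset.sum_congr rfl fun i _ => hterm i, ← Finset.mul_sum, hsum2,
    Finset.card_univ, Fintype.card_fin, pow_succ]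
  ring

/-- In the degenerate case `∑ᵢ αᵢ/λᵢ = 1`, the polynomial
`r(x) = ∏ᵢ(1 − λᵢx) + x·∑ᵢ αᵢ ∏_{j≠i}(1 − λⱼx)` has degree exactly `d − 1`,
and all its `d − 1` roots are real, distinct, and greater than `1`. -/
theorem r_degenerate_case (d : ℕ) (α lam : Fin d → ℝ)
    (hlam : ∀ i, lam i ∈ Set.Ioo (0 : ℝ) 1)
    (hdist : Function.Injective lam)
    (halpha : ∀ i, 0 < α i)
    (hsum : ∑ i, α i / lam i = 1)
    (r : Polynomial ℝ)
    (hr : r = ∏ i, (1 - C (lam i) * X) +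
      X * ∑ i, C (α i) * ∏ j ∈ Finset.univ.erase i, (1 - C (lam j) * X)) :
    r.natDegree = d - 1 ∧
    (r.roots).card = d - 1 ∧
    (r.roots).Nodup ∧
    ∀ x ∈ r.roots, 1 < x := by
  rcases Nat.eq_zero_or_pos d with rfl | hd
  · simp at hsum
  obtain ⟨e, rfl⟩ : ∃ e, d = e + 1 := ⟨d - 1, by omega⟩
  have hl0 : ∀ i, 0 < lam i := fun i => (hlam i).1
  have hl1 : ∀ i, lam i < 1 := fun i => (hlam i).2
  have hμinj : Function.Injective (fun i => (lam i)⁻¹) := fun a b h => hdist (inv_injective h)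
  set σ : Equiv.Perm (Fin (e + 1)) := Tuple.sort (fun i => (lam i)⁻¹) with hσ
  have hmono : StrictMono (fun i => (lam (σ i))⁻¹) := by
    have h1 : Monotone ((fun i => (lam i)⁻¹) ∘ σ) := Tuple.monotone_sort _
    exact h1.strictMono_of_injective (hμinj.comp σ.injective)
  have hsign := fun i => aux_sign (e + 1) α lam hl0 halpha r hr σ hmono i
  have hμ1 : ∀ k : Fin (e + 1), 1 < (lam k)⁻¹ := fun k => one_lt_inv₀ (hl0 k) |>.mpr (hl1 k)
  have hne : r ≠ 0 := by
    intro h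
    have h2 := hsign ⟨0, hd⟩
    rw [h] at h2
    simp at h2
  -- degree bounds
  have hfac : ∀ a : ℝ, (1 - C a * X : ℝ[X]).natDegree ≤ 1 := fun a => by compute_degree
  have hdegle : r.natDegree ≤ e + 1 := by
    rw [hr]
    apply le_trans (natDegree_add_le _ _)
    apply max_le
    · refine le_trans (natDegree_prod_le _ _) ?_
      refine le_trans (Finset.sum_le_sum fun i _ => hfac (lam i)) ?_
      simp
    · refine le_trans natDegree_mul_le ?_
      have h2 : (∑ i, C (α i) * ∏ j ∈ Finset.univ.erase i, (1 - C (lam j) * X) : ℝ[X]).natDegree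
          ≤ e := by
        apply natDegree_sum_le_of_forall_le
        intro i _
        refine le_trans natDegree_mul_le ?_
        have h3 : (∏ j ∈ Finset.univ.erase i, (1 - C (lam j) * X) : ℝ[X]).natDegree ≤ e := by
          refine le_trans (natDegree_prod_le _ _) ?_
          refine le_trans (Finset.sum_le_sum fun j _ => hfac (lam j)) ?_
          simp [Finset.card_erase_of_mem]
        simp only [natDegree_C, zero_add]
        exact h3
      simp only [natDegree_X]
      omega
  have hcoeffd : r.coeff (e + 1) = 0 := aux_coeff e α lam hl0 hsum r hr
  have hdeg : r.natDegree ≤ e := by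
    have hne2 : r.natDegree ≠ e + 1 := fun h =>
      hne (leadingCoeff_eq_zero.mp (by rw [leadingCoeff, h]; exact hcoeffd))
    omega
  -- roots via IVT
  have hcont : Continuous fun x : ℝ => r.eval x := r.continuous
  let a : Fin e → Fin (e + 1) := fun i => ⟨i, by have := i.isLt; omega⟩
  let b : Fin e → Fin (e + 1) := fun i => ⟨(i : ℕ) + 1, by have := i.isLt; omega⟩
  have hab : ∀ i : Fin e, (lam (σ (a i)))⁻¹ < (lam (σ (b i)))⁻¹ := fun i =>
    hmono (by simp [a, b, Fin.lt_def])
  have hroot : ∀ i : Fin e, ∃ x,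
      x ∈ Set.Ioo ((lam (σ (a i)))⁻¹) ((lam (σ (b i)))⁻¹) ∧ r.eval x = 0 := by
    intro i
    have s1 := hsign (a i)
    have s2 := hsign (b i)
    have ha' : ((a i : Fin (e + 1)) : ℕ) = (i : ℕ) := rfl
    have hb' : ((b i : Fin (e + 1)) : ℕ) = (i : ℕ) + 1 := rfl
    rw [ha'] at s1
    rw [hb', pow_succ] at s2
    rcases Nat.even_or_odd (i : ℕ) with he | ho
    · rw [he.neg_one_pow] at s1 s2
      have h1 : 0 < r.eval ((lam (σ (a i)))⁻¹) := by linarith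
      have h2 : r.eval ((lam (σ (b i)))⁻¹) < 0 := by nlinarith
      obtain ⟨x, hx, hx0⟩ := intermediate_value_Ioo' (le_of_lt (hab i)) hcont.continuousOn
        (Set.mem_Ioo.mpr ⟨h2, h1⟩)
      exact ⟨x, hx, hx0⟩
    · rw [ho.neg_one_pow] at s1 s2
      have h1 : r.eval ((lam (σ (a i)))⁻¹) < 0 := by linarith
      have h2 : 0 < r.eval ((lam (σ (b i)))⁻¹) := by nlinarith
      obtain ⟨x, hx, hx0⟩ := intermediate_value_Ioo (le_of_lt (hab i)) hcont.continuousOn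
        (Set.mem_Ioo.mpr ⟨h1, h2⟩)
      exact ⟨x, hx, hx0⟩
  choose ρ hρmem hρ0 using hroot
  have hρmono : StrictMono ρ := by
    intro i j hij
    have h1 : ρ i < (lam (σ (b i)))⁻¹ := (hρmem i).2
    have h2 : (lam (σ (a j)))⁻¹ < ρ j := (hρmem j).1
    have h3 : (lam (σ (b i)))⁻¹ ≤ (lam (σ (a j)))⁻¹ :=
      hmono.monotone (by simp [a, b, Fin.le_def]; omega)
    linarith
  have hρ1 : ∀ i, 1 < ρ i := fun i => lt_trans (hμ1 (σ (a i))) (hρmem i).1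
  set S : Finset ℝ := Finset.image ρ Finset.univ with hS
  have hScard : S.card = e := by
    rw [hS, Finset.card_image_of_injective _ hρmono.injective, Finset.card_univ, Fintype.card_fin]
  have hle : S.val ≤ r.roots := by
    refine (Multiset.le_iff_subset S.nodup).mpr ?_
    intro x hx
    obtain ⟨i, _, rfl⟩ := Finset.mem_image.mp (Finset.mem_val.mp hx)
    exact mem_roots'.mpr ⟨hne, hρ0 i⟩
  have hcardle : Multiset.card r.roots ≤ e := le_trans (r.card_roots') hdeg
  have hcardS : Multiset.card S.val = e := hScard
  have heq : r.roots = S.val :=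
    (Multiset.eq_of_le_of_card_le hle (le_trans hcardle (le_of_eq hcardS.symm))).symm
  have hge : e ≤ Multiset.card r.roots := by
    rw [heq, hcardS]
  refine ⟨?_, ?_, ?_, ?_⟩
  · have h := le_antisymm hdeg (le_trans hge r.card_roots')
    omega
  · rw [heq]
    omega
  · rw [heq]; exact S.nodup
  · intro x hx
    rw [heq] at hx
    obtain ⟨i, _, rfl⟩ := Finset.mem_image.mp (Finset.mem_val.mp hx)
    exact hρ1 i
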